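/- Every binomial ring R (a torsion-free commutative ring closed under x \mapsto \binom{x}{n} for all n) admits a unique special \lambda-ring structure with \lambda^n(x) = \binom{x}{n}, and in this structure all Adams operations \psi^k are the identity. -/

import Mathlib

/-- The Adams operations `ψ^k` determined by a family of λ-operations via the Newton
formula `ψ^k - λ¹ψ^{k-1} + ⋯ + (-1)^{k-1} λ^{k-1} ψ¹ = (-1)^{k-1} k λ^k`. -/
noncomputable def adams {R : Type*} [CommRing R] (lam : ℕ → R → R) : ℕ → R → R
  | 0, x => x
  | k + 1, x =>
      (-1 : R) ^ k * ((k + 1 : ℕ) : R) * lam (k + 1) x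
        - ∑ i ∈ Finset.range k,
            (-1 : R) ^ (i + 1) * lam (i + 1) x * adams lam (k - i) x
  termination_by k _ => k
  decreasing_by exact Nat.lt_succ_of_le (Nat.sub_le k i)

/-- A special λ-ring structure on a commutative ring `R`.  The first three axioms are the
pre-λ-ring axioms; since every binomial ring is `ℤ`-torsion-free, specialness is recorded
in Wilkerson's equivalent form: the associated Adams operations are natural ring
endomorphisms satisfying `ψ^k ∘ ψ^l = ψ^{kl}` and the Frobenius congruence
`ψ^p(x) ≡ x^p mod pR` for primes `p`. -/
structure SpecialLambdaStructure (R : Type*) [CommRing R] where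
  lam : ℕ → R → R
  lam_zero : ∀ x, lam 0 x = 1
  lam_one : ∀ x, lam 1 x = x
  lam_add : ∀ n x y, lam n (x + y) = ∑ i ∈ Finset.range (n + 1), lam i x * lam (n - i) y
  adams_map_one : ∀ k, 1 ≤ k → adams lam k 1 = 1
  adams_map_mul : ∀ k, 1 ≤ k → ∀ x y, adams lam k (x * y) = adams lam k x * adams lam k y
  adams_map_add : ∀ k, 1 ≤ k → ∀ x y, adams lam k (x + y) = adams lam k x + adams lam k y
  adams_comp : ∀ k l, 1 ≤ k → 1 ≤ l → ∀ x, adams lam k (adams lam l x) = adams lam (k * l) x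
  adams_frobenius : ∀ p : ℕ, p.Prime → ∀ x, ∃ y, adams lam p x - x ^ p = (p : R) * y

open Finset Polynomial

section Helpers
variable {R : Type*} [CommRing R] [BinomialRing R]

lemma pascal' (x : R) (k : ℕ) :
    Ring.choose x (k+1) = Ring.choose (x-1) k + Ring.choose (x-1) (k+1) := by
  have := Ring.choose_succ_succ (x-1) k
  rwa [sub_add_cancel] at this

lemma alt_sum (x : R) (k : ℕ) :
    ∑ i ∈ range (k+1), (-1:R)^i * Ring.choose x i = (-1)^k * Ring.choose (x-1) k := by
  induction k with
  | zero => simp [Ring.choose_zero_right]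
  | succ k ih =>
    rw [Finset.sum_range_succ, ih, pascal' x k]
    ring

lemma mul_choose_eq (x : R) (k : ℕ) :
    x * Ring.choose (x-1) k = (k+1) • Ring.choose x (k+1) := by
  apply (BinomialRing.toIsAddTorsionFree (R := R)).nsmul_right_injective (Nat.factorial_ne_zero (k+1))
  show ((k+1).factorial) • _ = ((k+1).factorial) • _
  conv_lhs => rw [Nat.factorial_succ, mul_smul, ← mul_smul_comm,
    ← Ring.descPochhammer_eq_factorial_smul_choose]
  conv_rhs => rw [smul_comm, ← Ring.descPochhammer_eq_factorial_smul_choose]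
  congr 1
  rw [descPochhammer_succ_left, smeval_X_mul, smeval_comp, smeval_sub, smeval_X, smeval_one]
  simp

lemma adams_choose (x : R) (k : ℕ) :
    adams (fun n (x : R) => Ring.choose x n) (k+1) x = x := by
  induction k using Nat.strong_induction_on with
  | _ k ih =>
    rw [adams]
    have hterm : ∀ i ∈ range k,
        (-1:R)^(i+1) * Ring.choose x (i+1) * adams (fun n (x : R) => Ring.choose x n) (k-i) x
        = (-1:R)^(i+1) * Ring.choose x (i+1) * x := by
      intro i hi
      have hilt := mem_range.mp hi
      have h1 : k - i = (k - i - 1) + 1 := by omega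
      rw [h1, ih (k - i - 1) (by omega)]
    rw [Finset.sum_congr rfl hterm, ← Finset.sum_mul]
    have hsum : ∑ i ∈ range k, (-1:R)^(i+1) * Ring.choose x (i+1)
        = (-1:R)^k * Ring.choose (x-1) k - 1 := by
      have h := alt_sum x k
      rw [Finset.sum_range_succ'] at h
      simp only [pow_zero, one_mul, Ring.choose_zero_right] at h
      linear_combination h
    rw [hsum]
    have h2 := mul_choose_eq x k
    rw [nsmul_eq_mul] at h2
    push_cast at h2 ⊢
    linear_combination (-(-1:R)^k) * h2

lemma adams_id (k : ℕ) (hk : 1 ≤ k) (x : R) :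
    adams (fun n (x : R) => Ring.choose x n) k x = x := by
  obtain ⟨m, rfl⟩ := Nat.exists_eq_succ_of_ne_zero (by omega : k ≠ 0)
  exact adams_choose x m

end Helpers

lemma descPochhammer_eq_prod (K : Type*) [CommRing K] (n : ℕ) :
    descPochhammer K n = ∏ i ∈ range n, (X - (i : K[X])) := by
  induction n with
  | zero => simp
  | succ n ih => rw [descPochhammer_succ_right, ih, Finset.prod_range_succ]

lemma zmod_descPochhammer (p : ℕ) (hp : p.Prime) :
    descPochhammer (ZMod p) p = X ^ p - X := by
  haveI : Fact p.Prime := ⟨hp⟩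
  have hcard : Fintype.card (ZMod p) = p := ZMod.card p
  have hmonic : (X ^ p - X : (ZMod p)[X]).Monic := by
    apply monic_X_pow_sub
    simpa using hp.one_lt
  have hroots : (X ^ p - X : (ZMod p)[X]).roots = Finset.univ.val := by
    have := FiniteField.roots_X_pow_card_sub_X (ZMod p)
    rwa [hcard] at this
  have hprod := prod_multiset_X_sub_C_of_monic_of_roots_card_eq hmonic ?_
  · rw [hroots] at hprod
    rw [descPochhammer_eq_prod, ← hprod]
    rw [show ((Finset.univ.val : Multiset (ZMod p)).map fun a => X - C a).prod
      = ∏ a : ZMod p, (X - C a) from rfl]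
    refine Finset.prod_bij' (fun i _ => ((i : ZMod p))) (fun a _ => a.val) ?_ ?_ ?_ ?_ ?_
    · intro a _; exact Finset.mem_univ _
    · intro a _; exact Finset.mem_range.mpr (ZMod.val_lt a)
    · intro a ha; exact ZMod.val_cast_of_lt (Finset.mem_range.mp ha)
    · intro a _; exact ZMod.natCast_rightInverse a
    · intro i _; rw [map_natCast C]
  · rw [hroots]
    have hdeg : (X ^ p - X : (ZMod p)[X]).natDegree = p :=
      FiniteField.X_pow_card_sub_X_natDegree_eq (ZMod p) hp.one_lt
    rw [hdeg]
    simp [hcard]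

lemma fermat_binomial {R : Type*} [CommRing R] [BinomialRing R] (p : ℕ) (hp : p.Prime)
    (x : R) : ∃ y : R, x - x ^ p = (p : R) * y := by
  haveI : Fact p.Prime := ⟨hp⟩
  set f : ℤ[X] := X ^ p - X - descPochhammer ℤ p with hf
  have hmap : f.map (Int.castRingHom (ZMod p)) = 0 := by
    rw [hf]
    simp only [Polynomial.map_sub, Polynomial.map_pow, Polynomial.map_X]
    rw [descPochhammer_map, zmod_descPochhammer p hp]
    ring
  have hdvd : C (p : ℤ) ∣ f := by
    rw [Polynomial.C_dvd_iff_dvd_coeff]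
    intro n
    have h := Polynomial.ext_iff.mp hmap n
    rw [Polynomial.coeff_map, Polynomial.coeff_zero] at h
    simpa [ZMod.intCast_zmod_eq_zero_iff_dvd] using h
  obtain ⟨g, hg⟩ := hdvd
  have hsm := congrArg (fun q : ℤ[X] => q.smeval x) hg
  simp only [hf, smeval_sub, smeval_X_pow, smeval_X, pow_one, smeval_C_mul,
    Ring.descPochhammer_eq_factorial_smul_choose] at hsm
  refine ⟨- ((p-1).factorial • Ring.choose x p) - g.smeval x, ?_⟩
  have hfac : p.factorial = p * (p-1).factorial := by
    rw [Nat.mul_factorial_pred hp.ne_zero]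
  rw [hfac, mul_smul] at hsm
  rw [nsmul_eq_mul, nsmul_eq_mul, zsmul_eq_mul] at hsm
  push_cast at hsm ⊢
  linear_combination -hsm

/-- The canonical special λ-structure on a binomial ring. -/
noncomputable def binomialLambda (R : Type*) [CommRing R] [BinomialRing R] :
    SpecialLambdaStructure R where
  lam := fun n (x : R) => Ring.choose x n
  lam_zero x := Ring.choose_zero_right x
  lam_one x := Ring.choose_one_right x
  lam_add n x y := by
    rw [Ring.add_choose_eq n (Commute.all x y),
      Finset.Nat.sum_antidiagonal_eq_sum_range_succ_mk]
  adams_map_one k hk := by rw [adams_id k hk]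
  adams_map_mul k hk x y := by rw [adams_id k hk, adams_id k hk, adams_id k hk]
  adams_map_add k hk x y := by rw [adams_id k hk, adams_id k hk, adams_id k hk]
  adams_comp k l hk hl x := by
    rw [adams_id l hl, adams_id k hk, adams_id (k * l) (Nat.one_le_iff_ne_zero.mpr (by positivity))]
  adams_frobenius p hp x := by
    rw [adams_id p hp.one_lt.le]
    exact fermat_binomial p hp x

lemma sls_ext {R : Type*} [CommRing R] {L M : SpecialLambdaStructure R}
    (h : L.lam = M.lam) : L = M := by
  cases L; cases M
  simp only at h
  subst h
  rfl

theorem binomialRing_special_lambda (R : Type*) [CommRing R] [BinomialRing R] :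
    (∃! L : SpecialLambdaStructure R, ∀ n (x : R), L.lam n x = Ring.choose x n) ∧
    (∀ k, 1 ≤ k → ∀ x : R, adams (fun n (x : R) => Ring.choose x n) k x = x) := by
  constructor
  · refine ⟨binomialLambda R, fun n x => rfl, ?_⟩
    intro L hL
    apply sls_ext
    funext n x
    exact hL n x
  · exact fun k hk x => adams_id k hk x
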